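/- Let k be an algebraically closed field of characteristic zero, V a finite-dimensional ℤ/2ℤ-graded vector space over k equipped with an odd symmetric non-degenerate scalar product g, and I an odd anti-self-adjoint operator on V. Then V decomposes as a direct sum of pairwise g-orthogonal, I-invariant graded subspaces, each of which is of type 1_k for some k ≥ 1, of type 2_k for some k ≥ 1, or of type 3 (i.e. I restricts to an invertible operator on it). -/

import Mathlib

/-- A finite-dimensional ℤ/2ℤ-graded vector space `V = V₀ ⊕ V₁` equipped with an odd
symmetric non-degenerate scalar product `g`: `g` vanishes on `V₀ × V₀` and `V₁ × V₁`,
is symmetric, and non-degenerate (hence a perfect pairing between `V₀` and `V₁`). -/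
structure OddSP (k V : Type*) [Field k] [AddCommGroup V] [Module k V] where
  V0 : Submodule k V
  V1 : Submodule k V
  compl : IsCompl V0 V1
  g : V →ₗ[k] V →ₗ[k] k
  symm : ∀ x y, g x y = g y x
  zero00 : ∀ x ∈ V0, ∀ y ∈ V0, g x y = 0
  zero11 : ∀ x ∈ V1, ∀ y ∈ V1, g x y = 0
  nondeg : ∀ x, (∀ y, g x y = 0) → x = 0

variable {k V : Type*} [Field k] [AddCommGroup V] [Module k V]

/-- `v` is homogeneous of parity `p` (mod 2). -/
def OddSP.Homog (S : OddSP k V) (p : ℕ) (v : V) : Prop :=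
  if p % 2 = 0 then v ∈ S.V0 else v ∈ S.V1

/-- A linear operator is odd if it exchanges the even and odd parts. -/
def OddSP.IsOddOp (S : OddSP k V) (I : V →ₗ[k] V) : Prop :=
  (∀ x ∈ S.V0, I x ∈ S.V1) ∧ (∀ x ∈ S.V1, I x ∈ S.V0)

/-- `g(Ix,y) + (−1)^{|x|} g(x,Iy) = 0` for homogeneous `x`. -/
def OddSP.IsAntiSelfAdj (S : OddSP k V) (I : V →ₗ[k] V) : Prop :=
  ∀ (p : ℕ) (x : V), S.Homog p x → ∀ y, S.g (I x) y + (-1 : k) ^ p * S.g x (I y) = 0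

/-- `g(Ix,y) = (−1)^{|x|} g(x,Iy)` for homogeneous `x`. -/
def OddSP.IsSelfAdj (S : OddSP k V) (I : V →ₗ[k] V) : Prop :=
  ∀ (p : ℕ) (x : V), S.Homog p x → ∀ y, S.g (I x) y = (-1 : k) ^ p * S.g x (I y)

/-- `U` is a graded subspace. -/
def OddSP.IsGraded (S : OddSP k V) (U : Submodule k V) : Prop :=
  U = (U ⊓ S.V0) ⊔ (U ⊓ S.V1)

/-- `U` is of type `1_K`: spanned by a single chain `v, Iv, …, I^{2K−1}v` with `v`
homogeneous of parity `K mod 2`, `I^{2K} v = 0`, and the prescribed Gram matrix. -/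
def OddSP.IsType1 (S : OddSP k V) (I : V →ₗ[k] V) (K : ℕ) (U : Submodule k V) : Prop :=
  ∃ v : V, S.Homog K v ∧ (I ^ (2 * K)) v = 0 ∧
    LinearIndependent k (fun m : Fin (2 * K) => (I ^ (m : ℕ)) v) ∧
    Submodule.span k (Set.range fun m : Fin (2 * K) => (I ^ (m : ℕ)) v) = U ∧
    ∀ m < 2 * K, ∀ m' < 2 * K,
      S.g ((I ^ m) v) ((I ^ m') v) =
        if m + m' = 2 * K - 1 then (-1 : k) ^ (m * (K % 2) + m * (m + 1) / 2) else 0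

/-- `U` is of type `2_K`: spanned by two chains `v, Iv, …, I^{K−1}v` and
`u, Iu, …, I^{K−1}u` with `v, u` homogeneous, `|v| + |u| ≡ K (mod 2)`,
`I^K v = I^K u = 0`, and the prescribed Gram matrix. -/
def OddSP.IsType2 (S : OddSP k V) (I : V →ₗ[k] V) (K : ℕ) (U : Submodule k V) : Prop :=
  ∃ (v u : V) (pv pu : ℕ), S.Homog pv v ∧ S.Homog pu u ∧ (pv + pu) % 2 = K % 2 ∧
    (I ^ K) v = 0 ∧ (I ^ K) u = 0 ∧
    LinearIndependent k
      (Sum.elim (fun m : Fin K => (I ^ (m : ℕ)) v) (fun m : Fin K => (I ^ (m : ℕ)) u)) ∧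
    Submodule.span k
      (Set.range (Sum.elim (fun m : Fin K => (I ^ (m : ℕ)) v)
        (fun m : Fin K => (I ^ (m : ℕ)) u))) = U ∧
    (∀ m < K, ∀ m' < K, S.g ((I ^ m) v) ((I ^ m') v) = 0) ∧
    (∀ m < K, ∀ m' < K, S.g ((I ^ m) u) ((I ^ m') u) = 0) ∧
    (∀ m < K, ∀ m' < K, S.g ((I ^ m) v) ((I ^ m') u) =
      if m + m' = K - 1 then (-1 : k) ^ (m * pv + m * (m + 1) / 2) else 0)

/-- `U` is of type `3`: `I` restricts to an invertible operator on `U`. -/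
def OddSP.IsType3 (I : V →ₗ[k] V) (U : Submodule k V) : Prop :=
  (∀ x ∈ U, I x ∈ U) ∧ (∀ x ∈ U, I x = 0 → x = 0) ∧ (∀ y ∈ U, ∃ x ∈ U, I x = y)

section Aux

variable {k V : Type*} [Field k] [AddCommGroup V] [Module k V]

theorem tri_succ' (m : ℕ) : (m+1)*(m+1+1)/2 = m*(m+1)/2 + (m+1) := by
  have h : (m+1)*(m+1+1) = m*(m+1) + 2*(m+1) := by ring
  obtain ⟨c, hc⟩ := Nat.even_mul_succ_self m
  omega

theorem tri_par (n : ℕ) : n*(n+1)/2 % 2 = (n/2 + n) % 2 := by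
  obtain ⟨q, r, hr, rfl⟩ : ∃ q r, r < 4 ∧ n = 4*q+r := ⟨n/4, n%4, by omega, by omega⟩
  have key : (4*q+r)*((4*q+r)+1) = 2*(8*(q*q) + 4*(q*r) + 2*q) + r*(r+1) := by ring
  obtain ⟨c, hc⟩ := Nat.even_mul_succ_self r
  interval_cases r <;> omega

theorem neg_one_pow_mod (a : ℕ) : ((-1:k))^a = (-1)^(a%2) := by
  conv_lhs => rw [show a = 2*(a/2) + a%2 by omega]
  rw [pow_add, pow_mul]
  norm_num

theorem neg_one_pow_congr_mod2 {a b : ℕ} (h : a%2 = b%2) : ((-1:k))^a = (-1)^b := by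
  rw [neg_one_pow_mod a, neg_one_pow_mod b, h]

theorem neg_one_pow_mul_self (a : ℕ) : ((-1:k))^a * (-1)^a = 1 := by
  rw [← pow_add, neg_one_pow_congr_mod2 (show (a+a)%2 = 0%2 by omega), pow_zero]

theorem neg_one_pow_ne (a : ℕ) : ((-1:k))^a ≠ 0 := pow_ne_zero _ (by norm_num)

namespace OddSP

variable (S : OddSP k V) {I : V →ₗ[k] V}

/-- The parity submodule. -/
def PS (p : ℕ) : Submodule k V := if p % 2 = 0 then S.V0 else S.V1

theorem homog_iff {p : ℕ} {v : V} : S.Homog p v ↔ v ∈ S.PS p := by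
  unfold OddSP.Homog PS
  split <;> rfl

variable {S}

theorem homog_congr {p q : ℕ} {v : V} (h : p % 2 = q % 2) (hv : S.Homog p v) :
    S.Homog q v := by
  rw [homog_iff] at hv ⊢
  unfold PS at hv ⊢
  rwa [← h]

theorem Homog.add {p : ℕ} {v w : V} (hv : S.Homog p v) (hw : S.Homog p w) :
    S.Homog p (v + w) := by
  rw [homog_iff] at *
  exact add_mem hv hw

theorem Homog.smul {p : ℕ} {v : V} (a : k) (hv : S.Homog p v) : S.Homog p (a • v) := by
  rw [homog_iff] at *
  exact Submodule.smul_mem _ a hv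

theorem Homog.zero (p : ℕ) : S.Homog p (0 : V) := by
  rw [homog_iff]; exact zero_mem _

/-- Same parity pairs to zero. -/
theorem g_same_par {p q : ℕ} {x y : V} (hx : S.Homog p x) (hy : S.Homog q y)
    (hpq : p % 2 = q % 2) : S.g x y = 0 := by
  rw [homog_iff] at hx hy
  unfold PS at hx hy
  rw [← hpq] at hy
  rcases Nat.mod_two_eq_zero_or_one p with h | h <;> simp [h] at hx hy
  · exact S.zero00 x hx y hy
  · exact S.zero11 x hx y hy

theorem homogI (hodd : S.IsOddOp I) {p : ℕ} {x : V} (hx : S.Homog p x) :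
    S.Homog (p+1) (I x) := by
  rw [homog_iff] at hx ⊢
  unfold PS at hx ⊢
  rcases Nat.mod_two_eq_zero_or_one p with h | h <;>
    simp [h, Nat.add_mod, Nat.mod_two_eq_zero_or_one] at hx ⊢
  · exact hodd.1 x hx
  · exact hodd.2 x hx

theorem homogIpow (hodd : S.IsOddOp I) {p : ℕ} {x : V} (hx : S.Homog p x) (m : ℕ) :
    S.Homog (p+m) ((I^m) x) := by
  induction m with
  | zero => simpa using hx
  | succ m ih =>
    have h1 : (I^(m+1)) x = I ((I^m) x) := by
      rw [pow_succ']; rfl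
    rw [h1, show p + (m+1) = (p + m) + 1 by ring]
    exact homogI hodd ih

/-- Iterated adjunction. -/
theorem gpow (hodd : S.IsOddOp I) (hasa : S.IsAntiSelfAdj I) {p : ℕ} {x : V}
    (hx : S.Homog p x) (m : ℕ) (y : V) :
    S.g ((I^m) x) y = (-1:k)^(m*p + m*(m+1)/2) * S.g x ((I^m) y) := by
  induction m generalizing x p with
  | zero => simp
  | succ m ih =>
    have h1 : ∀ z : V, (I^(m+1)) z = (I^m) (I z) := by
      intro z; rw [pow_succ]; rfl
    have h2 : ∀ z : V, (I^(m+1)) z = I ((I^m) z) := by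
      intro z; rw [pow_succ']; rfl
    rw [h1]
    rw [ih (homogI hodd hx)]
    have h3 : S.g (I x) ((I^m) y) = (-1:k)^(p+1) * S.g x ((I^(m+1)) y) := by
      have := hasa p x hx ((I^m) y)
      rw [h2 y]
      rw [pow_succ]
      have hps : ((-1:k))^p * (-1) = (-1)^(p+1) := by rw [pow_succ]
      linear_combination this - S.g x (I ((I^m) y)) * hps
    rw [h3, ← mul_assoc, ← pow_add]
    congr 1
    have e1 : (m+1)*(m+1+1)/2 = m*(m+1)/2 + (m+1) := tri_succ' m
    have e2 : m*(p+1) + m*(m+1)/2 + (p+1) = (m+1)*p + (m+1)*(m+1+1)/2 := by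
      have h : m*(p+1) = m*p + m := by ring
      have h' : (m+1)*p = m*p + p := by ring
      omega
    rw [e2]


theorem gpow' (hodd : S.IsOddOp I) (hasa : S.IsAntiSelfAdj I) {p : ℕ} {x : V}
    (hx : S.Homog p x) (m : ℕ) (y : V) :
    S.g x ((I^m) y) = (-1:k)^(m*p + m*(m+1)/2) * S.g ((I^m) x) y := by
  rw [gpow hodd hasa hx m y, ← mul_assoc, neg_one_pow_mul_self, one_mul]

theorem powZero {K m : ℕ} {x : V} (h : (I^K) x = 0) (hK : K ≤ m) : (I^m) x = 0 := by
  rw [show m = (m-K) + K by omega, pow_add, Module.End.mul_apply, h, map_zero]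

variable (S)

/-- Orthogonal complement w.r.t. `g`. -/
def ortho (U : Submodule k V) : Submodule k V where
  carrier := {x | ∀ y ∈ U, S.g x y = 0}
  add_mem' := by
    intro a b ha hb y hy
    rw [map_add, LinearMap.add_apply, ha y hy, hb y hy, add_zero]
  zero_mem' := by
    intro y hy
    rw [map_zero, LinearMap.zero_apply]
  smul_mem' := by
    intro c a ha y hy
    rw [map_smul, LinearMap.smul_apply, ha y hy, smul_zero]

theorem mem_ortho {U : Submodule k V} {x : V} : x ∈ S.ortho U ↔ ∀ y ∈ U, S.g x y = 0 :=
  Iff.rfl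

variable {S}

theorem homog0_iff {v : V} : S.Homog 0 v ↔ v ∈ S.V0 := by
  unfold OddSP.Homog; norm_num

theorem homog1_iff {v : V} : S.Homog 1 v ↔ v ∈ S.V1 := by
  unfold OddSP.Homog; norm_num

theorem isGraded_of_homog_span {s : Set V} (h : ∀ v ∈ s, ∃ p, S.Homog p v) :
    S.IsGraded (Submodule.span k s) := by
  refine le_antisymm ?_ (sup_le inf_le_left inf_le_left)
  rw [Submodule.span_le]
  intro v hv
  obtain ⟨p, hp⟩ := h v hv
  rw [homog_iff] at hp
  unfold PS at hp
  have hvs : v ∈ Submodule.span k s := Submodule.subset_span hv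
  rcases Nat.mod_two_eq_zero_or_one p with h2 | h2 <;> rw [h2] at hp <;> simp at hp
  · exact Submodule.mem_sup_left (Submodule.mem_inf.mpr ⟨hvs, hp⟩)
  · exact Submodule.mem_sup_right (Submodule.mem_inf.mpr ⟨hvs, hp⟩)

theorem IsGraded.decomp {W : Submodule k V} (hW : S.IsGraded W) {x : V} (hx : x ∈ W) :
    ∃ a b, a ∈ W ∧ b ∈ W ∧ S.Homog 0 a ∧ S.Homog 1 b ∧ x = a + b := by
  rw [hW] at hx
  obtain ⟨a, ha, b, hb, h⟩ := Submodule.mem_sup.mp hx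
  exact ⟨a, b, (Submodule.mem_inf.mp ha).1, (Submodule.mem_inf.mp hb).1,
    homog0_iff.mpr (Submodule.mem_inf.mp ha).2, homog1_iff.mpr (Submodule.mem_inf.mp hb).2,
    h.symm⟩

theorem isGraded_top : S.IsGraded (⊤ : Submodule k V) := by
  unfold OddSP.IsGraded
  rw [top_inf_eq, top_inf_eq]
  exact S.compl.codisjoint.eq_top.symm

/-- Elements of the same parity pair to zero; nonzero pairing forces opposite parity. -/
theorem opp_par {p q : ℕ} {x y : V} (hx : S.Homog p x) (hy : S.Homog q y)
    (h : S.g x y ≠ 0) : p % 2 ≠ q % 2 :=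
  fun hh => h (g_same_par hx hy hh)

/-- Forced vanishing of self-pairings along a chain. -/
theorem self_pair_zero [CharZero k] (hodd : S.IsOddOp I) (hasa : S.IsAntiSelfAdj I) {p t : ℕ} {x : V}
    (hx : S.Homog p x)
    (h : ¬ (t % 2 = 1 ∧ (t*p + t*(t+1)/2) % 2 = 0)) : S.g x ((I^t) x) = 0 := by
  rcases Nat.mod_two_eq_zero_or_one t with ht | ht
  · exact g_same_par hx (homogIpow hodd hx t) (by omega)
  · have hE : (t*p + t*(t+1)/2) % 2 = 1 := by
      rcases Nat.mod_two_eq_zero_or_one (t*p + t*(t+1)/2) with h2 | h2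
      · exact absurd ⟨ht, h2⟩ h
      · exact h2
    have h1 := gpow hodd hasa hx t x
    have h2 := S.symm x ((I^t) x)
    have hs : ((-1:k))^(t*p + t*(t+1)/2) = -1 := by
      rw [neg_one_pow_mod, hE, pow_one]
    have h3 : (2:k) * S.g x ((I^t) x) = 0 := by
      rw [hs] at h1
      linear_combination h2 + h1
    rcases mul_eq_zero.mp h3 with h4 | h4
    · exact absurd h4 two_ne_zero
    · exact h4

/-- Sign identity for the type-1 correction step. -/
theorem signA1 {t K p : ℕ} (hp : p ≤ 1) (ht : t % 2 = 1) (htK : t < K - 1) (hKodd : (K-1) % 2 = 1)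
    (hEt : (t*p + t*(t+1)/2) % 2 = 0) (hEK : ((K-1)*p + (K-1)*(K-1+1)/2) % 2 = 0) :
    ((K-1-t)*p + (K-1-t)*(K-1-t+1)/2) % 2 = 0 := by
  have h1 := tri_par t
  have h2 := tri_par (K-1)
  have h3 := tri_par (K-1-t)
  interval_cases p <;> omega

/-- `K` is even and `p ≡ K/2` in the type-1 case. -/
theorem signA2 {K p : ℕ} (hp : p ≤ 1) (hK1 : 1 ≤ K) (hKodd : (K-1) % 2 = 1)
    (hEK : ((K-1)*p + (K-1)*(K-1+1)/2) % 2 = 0) :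
    K % 2 = 0 ∧ p % 2 = (K/2) % 2 := by
  have h2 := tri_par (K-1)
  interval_cases p <;> omega

/-- Sign identity S1 for the type-2 correction of `c_t`. -/
theorem signB1 {t K p q : ℕ} (hp : p ≤ 1) (hq : q ≤ 1) (ht : t % 2 = 1) (htK : t < K - 1)
    (hpq : q % 2 = (p + K) % 2) (hEt : (t*p + t*(t+1)/2) % 2 = 0) :
    ((K-1-t)*q + (K-1-t)*(K-1-t+1)/2 + ((K-1)*p + (K-1)*(K-1+1)/2)) % 2 = 0 := by
  have h1 := tri_par t
  have h2 := tri_par (K-1)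
  have h3 := tri_par (K-1-t)
  interval_cases p <;> interval_cases q <;> omega

/-- Sign identity S2 for the type-2 correction of `d_t`. -/
theorem signB2 {t K p q : ℕ} (hp : p ≤ 1) (hq : q ≤ 1) (ht : t % 2 = 1) (htK : t < K - 1)
    (hpq : q % 2 = (p + K) % 2) (hEt : (t*q + t*(t+1)/2) % 2 = 0) :
    ((K-1-t)*p + (K-1-t)*(K-1-t+1)/2 + ((K-1)*p + (K-1)*(K-1+1)/2)) % 2 = 0 := by
  have h1 := tri_par t
  have h2 := tri_par (K-1)
  have h3 := tri_par (K-1-t)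
  interval_cases p <;> interval_cases q <;> omega

theorem pow_apply_add (I : V →ₗ[k] V) (a b : ℕ) (x : V) :
    (I^a) ((I^b) x) = (I^(a+b)) x := by
  rw [pow_add, Module.End.mul_apply]

theorem powMem {W : Submodule k V} (hWI : ∀ x ∈ W, I x ∈ W) (m : ℕ) :
    ∀ x ∈ W, (I^m) x ∈ W := by
  induction m with
  | zero => intro x hx; simpa using hx
  | succ m ih =>
    intro x hx
    have h1 : (I^(m+1)) x = I ((I^m) x) := by
      rw [show m+1 = 1+m by omega, ← pow_apply_add I 1 m x, pow_one]
    rw [h1]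
    exact hWI _ (ih x hx)

theorem gchain (hodd : S.IsOddOp I) (hasa : S.IsAntiSelfAdj I) {p : ℕ} {x : V}
    (hx : S.Homog p x) (m j : ℕ) (y : V) :
    S.g ((I^m) x) ((I^j) y) = (-1:k)^(m*p + m*(m+1)/2) * S.g x ((I^(m+j)) y) := by
  rw [gpow hodd hasa hx m, pow_apply_add]

/-- A system with invertible anti-diagonal Gram pairing is independent and nondegenerate. -/
theorem dual_system {ι : Type*} [Fintype ι] [DecidableEq ι] {f h : ι → V} {c : ι → k}
    (hc : ∀ i, c i ≠ 0)
    (hpair : ∀ i j, S.g (h i) (f j) = if i = j then c i else 0) :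
    LinearIndependent k f ∧
    (∀ x ∈ Submodule.span k (Set.range f), (∀ i, S.g (h i) x = 0) → x = 0) := by
  have key : ∀ (a : ι → k) (i : ι), S.g (h i) (∑ j, a j • f j) = a i * c i := by
    intro a i
    rw [map_sum]
    have h2 : ∀ j, S.g (h i) (a j • f j) = a j * (if i = j then c i else 0) := by
      intro j
      rw [map_smul, hpair, smul_eq_mul]
    rw [Finset.sum_congr rfl (fun j _ => h2 j)]
    rw [Finset.sum_eq_single i]
    · simp
    · intro b _ hb
      simp [Ne.symm hb]
    · intro hb
      exact absurd (Finset.mem_univ i) hb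
  constructor
  · rw [Fintype.linearIndependent_iff]
    intro a ha i
    have h1 := key a i
    rw [ha, map_zero] at h1
    rcases mul_eq_zero.mp h1.symm with h2 | h2
    · exact h2
    · exact absurd h2 (hc i)
  · intro x hx hzero
    obtain ⟨a, rfl⟩ := (Submodule.mem_span_range_iff_exists_fun k).mp hx
    have hz : ∀ i, a i = 0 := by
      intro i
      have h1 := key a i
      rw [hzero i] at h1
      rcases mul_eq_zero.mp h1.symm with h2 | h2
      · exact h2
      · exact absurd h2 (hc i)
    simp [hz]

/-- Invariance of the span of a chain. -/
theorem chain_inv {K : ℕ} {v : V} (hv : (I^K) v = 0) :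
    ∀ x ∈ Submodule.span k (Set.range fun m : Fin K => (I^(m:ℕ)) v),
      I x ∈ Submodule.span k (Set.range fun m : Fin K => (I^(m:ℕ)) v) := by
  intro x hx
  induction hx using Submodule.span_induction with
  | mem y hy =>
    obtain ⟨m, rfl⟩ := hy
    have h1 : I ((I^(m:ℕ)) v) = (I^((m:ℕ)+1)) v := by
      rw [show (m:ℕ)+1 = 1+(m:ℕ) by omega, ← pow_apply_add I 1 (m:ℕ) v, pow_one]
    rw [h1]
    rcases Nat.lt_or_ge ((m:ℕ)+1) K with h | h
    · exact Submodule.subset_span ⟨⟨(m:ℕ)+1, h⟩, rfl⟩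
    · rw [powZero hv ?_]
      · exact Submodule.zero_mem _
      · omega
  | zero => rw [map_zero]; exact Submodule.zero_mem _
  | add y z _ _ hy hz => rw [map_add]; exact Submodule.add_mem _ hy hz
  | smul a y _ hy => rw [map_smul]; exact Submodule.smul_mem _ a hy

/-- Normalization of a type-1 chain: kill all sub-top self-pairings. -/
theorem type1_norm [CharZero k] (hodd : S.IsOddOp I) (hasa : S.IsAntiSelfAdj I)
    {W : Submodule k V} (hWI : ∀ x ∈ W, I x ∈ W) {K : ℕ}
    (hK : ∀ x ∈ W, (I^K) x = 0) {p : ℕ} (hp : p ≤ 1) :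
    ∀ t, ∀ v ∈ W, S.Homog p v → S.g v ((I^(K-1)) v) ≠ 0 →
      (∀ j, t ≤ j → j < K-1 → S.g v ((I^j) v) = 0) →
      ∃ v' ∈ W, S.Homog p v' ∧ S.g v' ((I^(K-1)) v') ≠ 0 ∧
        (∀ j, j < K-1 → S.g v' ((I^j) v') = 0) := by
  intro t
  induction t with
  | zero =>
    intro v hv hhom htop hz
    exact ⟨v, hv, hhom, htop, fun j hj => hz j (Nat.zero_le j) hj⟩
  | succ t ih =>
    intro v hv hhom htop hz
    by_cases hct : S.g v ((I^t) v) = 0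
    · refine ih v hv hhom htop ?_
      intro j hj hj'
      rcases Nat.eq_or_lt_of_le hj with h | h
      · rw [← h]; exact hct
      · exact hz j h hj'
    rcases Nat.lt_or_ge t (K-1) with htK | htK
    swap
    · exact ih v hv hhom htop (fun j hj hj' => hz j (by omega) hj')
    have hodd_t : t % 2 = 1 ∧ (t*p + t*(t+1)/2) % 2 = 0 := by
      by_contra hcon
      exact hct (self_pair_zero hodd hasa hhom hcon)
    have hodd_K : (K-1) % 2 = 1 ∧ ((K-1)*p + (K-1)*(K-1+1)/2) % 2 = 0 := by
      by_contra hcon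
      exact htop (self_pair_zero hodd hasa hhom hcon)
    set e := K - 1 - t with he
    have he1 : 1 ≤ e := by omega
    have hsign : (e*p + e*(e+1)/2) % 2 = 0 :=
      signA1 hp hodd_t.1 htK hodd_K.1 hodd_t.2 hodd_K.2
    have hsk : ((-1:k))^(e*p + e*(e+1)/2) = 1 := by
      rw [neg_one_pow_mod, hsign, pow_zero]
    set ct := S.g v ((I^t) v) with hct'
    set c := S.g v ((I^(K-1)) v) with hc
    set lam := -(ct/(2*c)) with hlam
    set v' := v + lam • (I^e) v with hv'
    have hIev : (I^e) v ∈ W := powMem hWI e v hv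
    have hv'W : v' ∈ W := Submodule.add_mem _ hv (Submodule.smul_mem _ _ hIev)
    have hhom' : S.Homog p v' := by
      refine hhom.add (Homog.smul _ ?_)
      exact homog_congr (by omega) (homogIpow hodd hhom e)
    have hexp : ∀ j, S.g v' ((I^j) v') = S.g v ((I^j) v) + lam * S.g v ((I^(j+e)) v)
        + lam * S.g ((I^e) v) ((I^j) v) + lam * (lam * S.g ((I^e) v) ((I^(j+e)) v)) := by
      intro j
      have h1 : (I^j) v' = (I^j) v + lam • (I^(j+e)) v := by
        rw [hv', map_add, map_smul, pow_apply_add]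
      rw [hv', h1]
      simp only [map_add, map_smul, LinearMap.add_apply, LinearMap.smul_apply, smul_eq_mul]
      ring
    have hKv : (I^K) v = 0 := hK v hv
    have hhigh : ∀ m, K ≤ m → S.g v ((I^m) v) = 0 ∧ S.g ((I^e) v) ((I^m) v) = 0 := by
      intro m hm
      rw [powZero hKv hm]
      constructor <;> rw [map_zero]
    -- the new vector is zero at levels t ≤ j < K-1 and keeps the top value
    have htopv' : S.g v' ((I^(K-1)) v') = c := by
      rw [hexp (K-1)]
      rw [(hhigh (K-1+e) (by omega)).1]
      have h3 : S.g ((I^e) v) ((I^(K-1)) v) = ((-1:k))^(e*p + e*(e+1)/2) * S.g v ((I^(e+(K-1))) v) :=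
        gchain hodd hasa hhom e (K-1) v
      rw [h3, (hhigh (e+(K-1)) (by omega)).1, (hhigh (K-1+e) (by omega)).2]
      ring
    have hzero' : ∀ j, t ≤ j → j < K-1 → S.g v' ((I^j) v') = 0 := by
      intro j hj hj'
      rcases Nat.eq_or_lt_of_le hj with h | h
      · -- j = t
        rw [← h] at hj' ⊢
        rw [hexp t]
        have h2 : t + e = K - 1 := by omega
        have h3 : S.g ((I^e) v) ((I^t) v) = ((-1:k))^(e*p + e*(e+1)/2) * S.g v ((I^(e+t)) v) :=
          gchain hodd hasa hhom e t v
        have h4 : S.g ((I^e) v) ((I^(t+e)) v)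
            = ((-1:k))^(e*p + e*(e+1)/2) * S.g v ((I^(e+(t+e))) v) :=
          gchain hodd hasa hhom e (t+e) v
        rw [h3, h4, (hhigh (e+(t+e)) (by omega)).1]
        rw [show e + t = K-1 by omega, show t + e = K-1 by omega]
        rw [hsk, ← hc, ← hct', hlam]
        have hc0 : c ≠ 0 := htop
        field_simp
        ring
      · rw [hexp j]
        rw [hz j h hj']
        have h3 : S.g ((I^e) v) ((I^j) v) = ((-1:k))^(e*p + e*(e+1)/2) * S.g v ((I^(e+j)) v) :=
          gchain hodd hasa hhom e j v
        rw [h3, (hhigh (j+e) (by omega)).1, (hhigh (e+j) (by omega)).1,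
          (hhigh (j+e) (by omega)).2]
        ring
    refine ih v' hv'W hhom' ?_ hzero'
    rw [htopv']
    exact htop

/-- Extraction of a type-1 block. -/
theorem type1_block [CharZero k] [IsAlgClosed k] (hodd : S.IsOddOp I) (hasa : S.IsAntiSelfAdj I)
    {W : Submodule k V} (hWI : ∀ x ∈ W, I x ∈ W) {K : ℕ} (hK1 : 1 ≤ K)
    (hK : ∀ x ∈ W, (I^K) x = 0) {p : ℕ} (hp : p ≤ 1) {v : V} (hv : v ∈ W)
    (hhom : S.Homog p v) (htop : S.g v ((I^(K-1)) v) ≠ 0) :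
    ∃ U : Submodule k V, U ≤ W ∧ (∀ x ∈ U, I x ∈ U) ∧ S.IsGraded U ∧
      (∀ x ∈ U, (∀ y ∈ U, S.g x y = 0) → x = 0) ∧
      (∃ K', 1 ≤ K' ∧ S.IsType1 I K' U) ∧ U ≠ ⊥ := by
  classical
  obtain ⟨v₁, hv₁W, hhom₁, htop₁, hlow₁⟩ :=
    type1_norm hodd hasa hWI hK hp (K-1) v hv hhom htop (by omega)
  obtain ⟨a, ha⟩ := IsAlgClosed.exists_pow_nat_eq (S.g v₁ ((I^(K-1)) v₁))⁻¹ (zero_lt_two)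
  set w := a • v₁ with hw
  have hwW : w ∈ W := Submodule.smul_mem _ _ hv₁W
  have hwhom : S.Homog p w := hhom₁.smul a
  have hwpair : ∀ j, S.g w ((I^j) w) = a^2 * S.g v₁ ((I^j) v₁) := by
    intro j
    rw [hw]
    simp only [map_smul, LinearMap.smul_apply, smul_eq_mul]
    ring
  have hwtop : S.g w ((I^(K-1)) w) = 1 := by
    rw [hwpair, ha]
    exact inv_mul_cancel₀ htop₁
  have hwlow : ∀ j, j < K-1 → S.g w ((I^j) w) = 0 := by
    intro j hj
    rw [hwpair, hlow₁ j hj, mul_zero]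
  have hoddK : (K-1) % 2 = 1 ∧ ((K-1)*p + (K-1)*(K-1+1)/2) % 2 = 0 := by
    by_contra hcon
    exact htop (self_pair_zero hodd hasa hhom hcon)
  obtain ⟨hKeven, hpK⟩ := signA2 hp hK1 hoddK.1 hoddK.2
  set K' := K/2 with hK'
  have hKK : 2*K' = K := by omega
  have hK'1 : 1 ≤ K' := by omega
  have hpK' : p = K' % 2 := by omega
  have hKw : (I^K) w = 0 := hK w hwW
  have hgram : ∀ m m', S.g ((I^m) w) ((I^m') w) =
      if m + m' = K - 1 then (-1:k)^(m*p + m*(m+1)/2) else 0 := by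
    intro m m'
    rw [gchain hodd hasa hwhom m m' w]
    by_cases h : m + m' = K-1
    · rw [if_pos h, h, hwtop, mul_one]
    · rw [if_neg h]
      rcases Nat.lt_or_ge (m+m') K with h2 | h2
      · rw [hwlow (m+m') (by omega), mul_zero]
      · rw [powZero hKw h2, map_zero, mul_zero]
  have hdual := dual_system (S := S)
    (f := fun m : Fin K => (I^(m:ℕ)) w) (h := fun m : Fin K => (I^(K-1-(m:ℕ))) w)
    (c := fun m : Fin K => (-1:k)^((K-1-(m:ℕ))*p + (K-1-(m:ℕ))*(K-1-(m:ℕ)+1)/2))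
    (fun i => neg_one_pow_ne _) ?_
  swap
  · intro i j
    have hi := i.isLt
    have hj := j.isLt
    rw [hgram]
    by_cases h : i = j
    · subst h
      rw [if_pos (by omega), if_pos rfl]
    · rw [if_neg ?_, if_neg h]
      intro hcon
      exact h (Fin.ext (by omega))
  obtain ⟨hLI, hnd⟩ := hdual
  set U := Submodule.span k (Set.range fun m : Fin K => (I^(m:ℕ)) w) with hU
  have hUW : U ≤ W := by
    rw [hU, Submodule.span_le]
    rintro _ ⟨m, rfl⟩
    exact powMem hWI _ w hwW
  have hUinv : ∀ x ∈ U, I x ∈ U := chain_inv hKw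
  have hUgraded : S.IsGraded U := by
    apply isGraded_of_homog_span
    rintro _ ⟨m, rfl⟩
    exact ⟨p + (m:ℕ), homogIpow hodd hwhom _⟩
  have hUnd : ∀ x ∈ U, (∀ y ∈ U, S.g x y = 0) → x = 0 := by
    intro x hx hxy
    refine hnd x hx ?_
    intro i
    rw [S.symm]
    refine hxy _ ?_
    exact Submodule.subset_span ⟨⟨K-1-(i:ℕ), by omega⟩, rfl⟩
  have hwU : w ∈ U := by
    refine Submodule.subset_span ⟨⟨0, by omega⟩, ?_⟩
    simp
  have hwne : w ≠ 0 := by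
    intro h
    rw [h] at hwtop
    simp at hwtop
  refine ⟨U, hUW, hUinv, hUgraded, hUnd, ⟨K', hK'1, ?_⟩, ?_⟩
  · unfold OddSP.IsType1
    rw [hKK]
    refine ⟨w, homog_congr (by omega) hwhom, hKw, hLI, rfl, ?_⟩
    intro m hm m' hm'
    rw [hgram m m', ← hpK']
  · intro h
    rw [h] at hwU
    exact hwne (Submodule.mem_bot k |>.mp hwU)

theorem gz_right {K m : ℕ} {x y : V} (hy : (I^K) y = 0) (hm : K ≤ m) :
    S.g x ((I^m) y) = 0 := by
  rw [powZero hy hm, map_zero]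

theorem gexp {x y z w : V} (α β : k) (j : ℕ) :
    S.g (x + α • y) ((I^j) (z + β • w)) = S.g x ((I^j) z) + β * S.g x ((I^j) w)
      + α * S.g y ((I^j) z) + α * (β * S.g y ((I^j) w)) := by
  simp only [map_add, map_smul, LinearMap.add_apply, LinearMap.smul_apply, smul_eq_mul]
  ring

theorem gexp_right {x z w : V} (β : k) (j : ℕ) :
    S.g x ((I^j) (z + β • w)) = S.g x ((I^j) z) + β * S.g x ((I^j) w) := by
  simp only [map_add, map_smul, LinearMap.add_apply, LinearMap.smul_apply, smul_eq_mul]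

/-- Normalization of a type-2 pair of chains. -/
theorem type2_norm [CharZero k] (hodd : S.IsOddOp I) (hasa : S.IsAntiSelfAdj I)
    {W : Submodule k V} (hWI : ∀ x ∈ W, I x ∈ W) {K : ℕ}
    (hK : ∀ x ∈ W, (I^K) x = 0) (hK1 : 1 ≤ K) {p q : ℕ} (hp : p ≤ 1) (hq : q ≤ 1)
    (hpq : q % 2 = (p + K) % 2)
    (hyp2 : ∀ (r : ℕ) (w : V), w ∈ W → S.Homog r w → S.g w ((I^(K-1)) w) = 0) :
    ∀ t, ∀ v u, v ∈ W → u ∈ W → S.Homog p v → S.Homog q u →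
      S.g v ((I^(K-1)) u) = 1 →
      (∀ j, t ≤ j → j < K-1 → S.g v ((I^j) u) = 0) →
      (∀ j, t ≤ j → j < K → S.g v ((I^j) v) = 0) →
      (∀ j, t ≤ j → j < K → S.g u ((I^j) u) = 0) →
      ∃ v' u', v' ∈ W ∧ u' ∈ W ∧ S.Homog p v' ∧ S.Homog q u' ∧
        S.g v' ((I^(K-1)) u') = 1 ∧
        (∀ j, j < K-1 → S.g v' ((I^j) u') = 0) ∧
        (∀ j, j < K → S.g v' ((I^j) v') = 0) ∧
        (∀ j, j < K → S.g u' ((I^j) u') = 0) := by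
  intro t
  induction t with
  | zero =>
    intro v u hv hu hhv hhu htop hcr hcc hdd
    exact ⟨v, u, hv, hu, hhv, hhu, htop, fun j hj => hcr j (Nat.zero_le j) hj,
      fun j hj => hcc j (Nat.zero_le j) hj, fun j hj => hdd j (Nat.zero_le j) hj⟩
  | succ t ih =>
    intro v u hv hu hhv hhu htop hcr hcc hdd
    have hKv : (I^K) v = 0 := hK v hv
    have hKu : (I^K) u = 0 := hK u hu
    rcases Nat.lt_or_ge t K with htK | htK
    swap
    · exact ih v u hv hu hhv hhu htop (fun j hj hj' => hcr j (by omega) hj')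
        (fun j hj hj' => hcc j (by omega) hj') (fun j hj hj' => hdd j (by omega) hj')
    -- Step (a) : kill g v (I^t v)
    have step1 : ∃ v₁, v₁ ∈ W ∧ S.Homog p v₁ ∧
        (∀ j, t ≤ j → j < K → S.g v₁ ((I^j) v₁) = 0) ∧
        (∀ j, t ≤ j → S.g v₁ ((I^j) u) = S.g v ((I^j) u)) := by
      by_cases hct : S.g v ((I^t) v) = 0
      · refine ⟨v, hv, hhv, ?_, fun j _ => rfl⟩
        intro j hj hj'
        rcases Nat.eq_or_lt_of_le hj with h | h
        · rw [← h]; exact hct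
        · exact hcc j h hj'
      · have hforce : t % 2 = 1 ∧ (t*p + t*(t+1)/2) % 2 = 0 := by
          by_contra hcon
          exact hct (self_pair_zero hodd hasa hhv hcon)
        have htK1 : t < K - 1 := by
          rcases Nat.lt_or_ge t (K-1) with h | h
          · exact h
          · exfalso
            have ht' : t = K-1 := by omega
            exact hct (by rw [ht']; exact hyp2 p v hv hhv)
        set e := K - 1 - t with he
        have hsign : (e*q + e*(e+1)/2 + ((K-1)*p + (K-1)*(K-1+1)/2)) % 2 = 0 :=
          signB1 hp hq hforce.1 htK1 hpq hforce.2
        set μ := -(S.g v ((I^t) v) / 2) with hμ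
        set v₁ := v + μ • (I^e) u with hv₁
        have hIeu : (I^e) u ∈ W := powMem hWI e u hu
        have hv₁W : v₁ ∈ W := Submodule.add_mem _ hv (Submodule.smul_mem _ _ hIeu)
        have hhv₁ : S.Homog p v₁ := by
          refine hhv.add (Homog.smul _ ?_)
          refine homog_congr ?_ (homogIpow hodd hhu e)
          omega
        have hguv : S.g u ((I^(K-1)) v) = (-1:k)^((K-1)*p + (K-1)*(K-1+1)/2) := by
          rw [S.symm, gpow hodd hasa hhv (K-1) u, htop, mul_one]
        have hexp : ∀ j, S.g v₁ ((I^j) v₁) = S.g v ((I^j) v) + μ * S.g v ((I^(j+e)) u)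
            + μ * ((-1:k)^(e*q + e*(e+1)/2) * S.g u ((I^(e+j)) v))
            + μ * (μ * ((-1:k)^(e*q + e*(e+1)/2) * S.g u ((I^(e+(j+e))) u))) := by
          intro j
          rw [hv₁, gexp, pow_apply_add I j e u, gchain hodd hasa hhu e j v,
            gchain hodd hasa hhu e (j+e) u]
        refine ⟨v₁, hv₁W, hhv₁, ?_, ?_⟩
        · intro j hj hj'
          rw [hexp j]
          rcases Nat.eq_or_lt_of_le hj with h | h
          · rw [← h] at hj' ⊢
            rw [show t + e = K-1 by omega, show e + t = K-1 by omega, htop, hguv]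
            rw [gz_right hKu (by omega)]
            have hcomb : ((-1:k))^(e*q + e*(e+1)/2) * (-1:k)^((K-1)*p + (K-1)*(K-1+1)/2)
                = 1 := by
              rw [← pow_add, neg_one_pow_mod, hsign, pow_zero]
            rw [hμ]
            linear_combination (-(S.g v ((I^t) v))/2) * hcomb
          · rw [hcc j h hj', gz_right hKu (by omega), gz_right hKv (by omega),
              gz_right hKu (by omega)]
            ring
        · intro j hj
          rw [hv₁]
          have h1 : S.g (v + μ • (I^e) u) ((I^j) u)
              = S.g v ((I^j) u) + μ * S.g ((I^e) u) ((I^j) u) := by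
            simp only [map_add, map_smul, LinearMap.add_apply, LinearMap.smul_apply,
              smul_eq_mul]
          rw [h1, gchain hodd hasa hhu e j u]
          rcases Nat.eq_or_lt_of_le hj with h | h
          · rw [← h, show e + t = K-1 by omega, hyp2 q u hu hhu]
            ring
          · rw [gz_right hKu (show K ≤ e + j by omega)]
            ring
    obtain ⟨v₁, hv₁W, hhv₁, hcc₁, hcrpres₁⟩ := step1
    have htop₁ : S.g v₁ ((I^(K-1)) u) = 1 := by
      rw [hcrpres₁ (K-1) (by omega), htop]
    have hcr₁ : ∀ j, t+1 ≤ j → j < K-1 → S.g v₁ ((I^j) u) = 0 := by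
      intro j hj hj'
      rw [hcrpres₁ j (by omega)]
      exact hcr j hj hj'
    have hKv₁ : (I^K) v₁ = 0 := hK v₁ hv₁W
    -- Step (b) : kill g u (I^t u)
    have step2 : ∃ u₂, u₂ ∈ W ∧ S.Homog q u₂ ∧
        (∀ j, t ≤ j → j < K → S.g u₂ ((I^j) u₂) = 0) ∧
        (∀ j, t ≤ j → S.g v₁ ((I^j) u₂) = S.g v₁ ((I^j) u)) := by
      by_cases hdt : S.g u ((I^t) u) = 0
      · refine ⟨u, hu, hhu, ?_, fun j _ => rfl⟩
        intro j hj hj'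
        rcases Nat.eq_or_lt_of_le hj with h | h
        · rw [← h]; exact hdt
        · exact hdd j h hj'
      · have hforce : t % 2 = 1 ∧ (t*q + t*(t+1)/2) % 2 = 0 := by
          by_contra hcon
          exact hdt (self_pair_zero hodd hasa hhu hcon)
        have htK1 : t < K - 1 := by
          rcases Nat.lt_or_ge t (K-1) with h | h
          · exact h
          · exfalso
            have ht' : t = K-1 := by omega
            exact hdt (by rw [ht']; exact hyp2 q u hu hhu)
        set e := K - 1 - t with he
        have hsign : (e*p + e*(e+1)/2 + ((K-1)*p + (K-1)*(K-1+1)/2)) % 2 = 0 :=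
          signB2 hp hq hforce.1 htK1 hpq hforce.2
        set EK := (K-1)*p + (K-1)*(K-1+1)/2 with hEK
        set ν := -(S.g u ((I^t) u) * (-1:k)^EK / 2) with hν
        set u₂ := u + ν • (I^e) v₁ with hu₂
        have hIev : (I^e) v₁ ∈ W := powMem hWI e v₁ hv₁W
        have hu₂W : u₂ ∈ W := Submodule.add_mem _ hu (Submodule.smul_mem _ _ hIev)
        have hhu₂ : S.Homog q u₂ := by
          refine hhu.add (Homog.smul _ ?_)
          refine homog_congr ?_ (homogIpow hodd hhv₁ e)
          omega
        have hguv : S.g u ((I^(K-1)) v₁) = (-1:k)^EK := by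
          rw [S.symm, gpow hodd hasa hhv₁ (K-1) u, htop₁, mul_one]
        have hexp : ∀ j, S.g u₂ ((I^j) u₂) = S.g u ((I^j) u) + ν * S.g u ((I^(j+e)) v₁)
            + ν * ((-1:k)^(e*p + e*(e+1)/2) * S.g v₁ ((I^(e+j)) u))
            + ν * (ν * ((-1:k)^(e*p + e*(e+1)/2) * S.g v₁ ((I^(e+(j+e))) v₁))) := by
          intro j
          rw [hu₂, gexp, pow_apply_add I j e v₁, gchain hodd hasa hhv₁ e j u,
            gchain hodd hasa hhv₁ e (j+e) v₁]
        refine ⟨u₂, hu₂W, hhu₂, ?_, ?_⟩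
        · intro j hj hj'
          rw [hexp j]
          rcases Nat.eq_or_lt_of_le hj with h | h
          · rw [← h] at hj' ⊢
            rw [show t + e = K-1 by omega, show e + t = K-1 by omega, htop₁, hguv]
            rw [gz_right hKv₁ (by omega)]
            have hcomb : ((-1:k))^(e*p + e*(e+1)/2) = (-1:k)^EK :=
              neg_one_pow_congr_mod2 (by omega)
            have hsq : ((-1:k))^EK * (-1:k)^EK = 1 := neg_one_pow_mul_self EK
            rw [hcomb, hν]
            linear_combination (-(S.g u ((I^t) u))) * hsq
          · rw [hdd j h hj', gz_right hKv₁ (by omega), gz_right hKu (by omega),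
              gz_right hKv₁ (by omega)]
            ring
        · intro j hj
          rw [hu₂, gexp_right, pow_apply_add I j e v₁]
          rcases Nat.eq_or_lt_of_le hj with h | h
          · rw [← h, show t + e = K-1 by omega, hyp2 p v₁ hv₁W hhv₁]
            ring
          · rw [gz_right hKv₁ (show K ≤ j + e by omega)]
            ring
    obtain ⟨u₂, hu₂W, hhu₂, hdd₂, hcrpres₂⟩ := step2
    have htop₂ : S.g v₁ ((I^(K-1)) u₂) = 1 := by
      rw [hcrpres₂ (K-1) (by omega), htop₁]
    have hcr₂ : ∀ j, t+1 ≤ j → j < K-1 → S.g v₁ ((I^j) u₂) = 0 := by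
      intro j hj hj'
      rw [hcrpres₂ j (by omega)]
      exact hcr₁ j hj hj'
    have hKu₂ : (I^K) u₂ = 0 := hK u₂ hu₂W
    -- Step (c) : kill g v₁ (I^t u₂)
    have step3 : ∃ u₃, u₃ ∈ W ∧ S.Homog q u₃ ∧
        (∀ j, t ≤ j → j < K → S.g u₃ ((I^j) u₃) = 0) ∧
        (∀ j, t+1 ≤ j → j < K-1 → S.g v₁ ((I^j) u₃) = 0) ∧
        (S.g v₁ ((I^(K-1)) u₃) = 1) ∧
        (t < K-1 → S.g v₁ ((I^t) u₃) = 0) := by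
      by_cases hcase : t < K-1 ∧ S.g v₁ ((I^t) u₂) ≠ 0
      swap
      · refine ⟨u₂, hu₂W, hhu₂, hdd₂, hcr₂, htop₂, ?_⟩
        intro ht'
        rcases not_and_or.mp hcase with h | h
        · exact absurd ht' h
        · exact not_ne_iff.mp h
      obtain ⟨htK1, hct⟩ := hcase
      set e := K - 1 - t with he
      have heeven : e % 2 = 0 := by
        have hop := opp_par hhv₁ (homogIpow hodd hhu₂ t) hct
        omega
      set lam := -(S.g v₁ ((I^t) u₂)) with hlam
      set u₃ := u₂ + lam • (I^e) u₂ with hu₃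
      have hIeu₂ : (I^e) u₂ ∈ W := powMem hWI e u₂ hu₂W
      have hu₃W : u₃ ∈ W := Submodule.add_mem _ hu₂W (Submodule.smul_mem _ _ hIeu₂)
      have hhu₃ : S.Homog q u₃ := by
        refine hhu₂.add (Homog.smul _ ?_)
        refine homog_congr ?_ (homogIpow hodd hhu₂ e)
        omega
      have hdval : ∀ m, K-1 ≤ m → S.g u₂ ((I^m) u₂) = 0 := by
        intro m hm
        rcases Nat.lt_or_ge m K with h | h
        · exact hdd₂ m (by omega) h
        · exact gz_right hKu₂ h
      refine ⟨u₃, hu₃W, hhu₃, ?_, ?_, ?_, ?_⟩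
      · intro j hj hj'
        rw [hu₃, gexp, pow_apply_add I j e u₂, gchain hodd hasa hhu₂ e j u₂,
          gchain hodd hasa hhu₂ e (j+e) u₂]
        rw [hdd₂ j hj hj', hdval (j+e) (by omega), hdval (e+j) (by omega),
          hdval (e+(j+e)) (by omega)]
        ring
      · intro j hj hj'
        rw [hu₃, gexp_right, pow_apply_add I j e u₂,
          gz_right hKu₂ (show K ≤ j + e by omega), hcr₂ j hj hj']
        ring
      · rw [hu₃, gexp_right, pow_apply_add I (K-1) e u₂,
          gz_right hKu₂ (show K ≤ K-1 + e by omega), htop₂]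
        ring
      · intro _
        rw [hu₃, gexp_right, pow_apply_add I t e u₂, show t + e = K-1 by omega, htop₂]
        rw [hlam]
        ring
    obtain ⟨u₃, hu₃W, hhu₃, hdd₃, hcr₃, htop₃, hcrt₃⟩ := step3
    refine ih v₁ u₃ hv₁W hu₃W hhv₁ hhu₃ htop₃ ?_ hcc₁ hdd₃
    intro j hj hj'
    rcases Nat.eq_or_lt_of_le hj with h | h
    · rw [← h] at hj' ⊢
      exact hcrt₃ hj'
    · exact hcr₃ j h hj'

/-- Extraction of a type-2 block. -/
theorem type2_block [CharZero k] (hodd : S.IsOddOp I) (hasa : S.IsAntiSelfAdj I)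
    {W : Submodule k V} (hWI : ∀ x ∈ W, I x ∈ W) {K : ℕ} (hK1 : 1 ≤ K)
    (hK : ∀ x ∈ W, (I^K) x = 0) {p q : ℕ} (hp : p ≤ 1) (hq : q ≤ 1)
    (hpq : q % 2 = (p + K) % 2)
    (hyp2 : ∀ (r : ℕ) (w : V), w ∈ W → S.Homog r w → S.g w ((I^(K-1)) w) = 0)
    {v u : V} (hv : v ∈ W) (hu : u ∈ W) (hhv : S.Homog p v) (hhu : S.Homog q u)
    (htop : S.g v ((I^(K-1)) u) ≠ 0) :
    ∃ U : Submodule k V, U ≤ W ∧ (∀ x ∈ U, I x ∈ U) ∧ S.IsGraded U ∧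
      (∀ x ∈ U, (∀ y ∈ U, S.g x y = 0) → x = 0) ∧
      (∃ K', 1 ≤ K' ∧ S.IsType2 I K' U) ∧ U ≠ ⊥ := by
  classical
  -- scale u to make the top cross pairing 1
  set u₀ := (S.g v ((I^(K-1)) u))⁻¹ • u with hu₀
  have hu₀W : u₀ ∈ W := Submodule.smul_mem _ _ hu
  have hhu₀ : S.Homog q u₀ := hhu.smul _
  have htop₀ : S.g v ((I^(K-1)) u₀) = 1 := by
    rw [hu₀]
    simp only [map_smul, smul_eq_mul]
    exact inv_mul_cancel₀ htop
  obtain ⟨v', u', hv'W, hu'W, hhv', hhu', htop', hcr', hcc', hdd'⟩ :=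
    type2_norm hodd hasa hWI hK hK1 hp hq hpq hyp2 K v u₀ hv hu₀W hhv hhu₀ htop₀
      (fun j hj hj' => absurd hj (by omega)) (fun j hj hj' => absurd hj (by omega))
      (fun j hj hj' => absurd hj (by omega))
  have hKv' : (I^K) v' = 0 := hK v' hv'W
  have hKu' : (I^K) u' = 0 := hK u' hu'W
  have hccall : ∀ j, S.g v' ((I^j) v') = 0 := by
    intro j
    rcases Nat.lt_or_ge j K with h | h
    · exact hcc' j h
    · exact gz_right hKv' h
  have hddall : ∀ j, S.g u' ((I^j) u') = 0 := by
    intro j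
    rcases Nat.lt_or_ge j K with h | h
    · exact hdd' j h
    · exact gz_right hKu' h
  have hcrall : ∀ j, S.g v' ((I^j) u') = if j = K-1 then 1 else 0 := by
    intro j
    by_cases h : j = K-1
    · rw [if_pos h, h, htop']
    · rw [if_neg h]
      rcases Nat.lt_or_ge j K with h2 | h2
      · exact hcr' j (by omega)
      · exact gz_right hKu' h2
  have hrcrall : ∀ j, S.g u' ((I^j) v') =
      if j = K-1 then (-1:k)^((K-1)*p + (K-1)*(K-1+1)/2) else 0 := by
    intro j
    rw [S.symm, gpow hodd hasa hhv' j u', hcrall j]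
    by_cases h : j = K-1
    · rw [if_pos h, if_pos h, h, mul_one]
    · rw [if_neg h, if_neg h, mul_zero]
  set f : Fin K ⊕ Fin K → V :=
    Sum.elim (fun m : Fin K => (I^(m:ℕ)) v') (fun m : Fin K => (I^(m:ℕ)) u') with hf
  set U := Submodule.span k (Set.range f) with hU
  have hgvv : ∀ (m m' : ℕ), S.g ((I^m) v') ((I^m') v') = 0 := by
    intro m m'
    rw [gchain hodd hasa hhv' m m' v', hccall, mul_zero]
  have hguu : ∀ (m m' : ℕ), S.g ((I^m) u') ((I^m') u') = 0 := by
    intro m m'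
    rw [gchain hodd hasa hhu' m m' u', hddall, mul_zero]
  have hgvu : ∀ (m m' : ℕ), S.g ((I^m) v') ((I^m') u') =
      if m + m' = K-1 then (-1:k)^(m*p + m*(m+1)/2) else 0 := by
    intro m m'
    rw [gchain hodd hasa hhv' m m' u', hcrall]
    by_cases h : m + m' = K-1
    · rw [if_pos h, if_pos h, mul_one]
    · rw [if_neg h, if_neg h, mul_zero]
  have hguv : ∀ (m m' : ℕ), S.g ((I^m) u') ((I^m') v') =
      if m + m' = K-1 then (-1:k)^(m*q + m*(m+1)/2) * (-1:k)^((K-1)*p + (K-1)*(K-1+1)/2)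
      else 0 := by
    intro m m'
    rw [gchain hodd hasa hhu' m m' v', hrcrall]
    by_cases h : m + m' = K-1
    · rw [if_pos h, if_pos h]
    · rw [if_neg h, if_neg h, mul_zero]
  set h : Fin K ⊕ Fin K → V :=
    Sum.elim (fun m : Fin K => (I^(K-1-(m:ℕ))) u') (fun m : Fin K => (I^(K-1-(m:ℕ))) v')
    with hh
  set c : Fin K ⊕ Fin K → k :=
    Sum.elim (fun m : Fin K => (-1:k)^((K-1-(m:ℕ))*q + (K-1-(m:ℕ))*(K-1-(m:ℕ)+1)/2)
        * (-1:k)^((K-1)*p + (K-1)*(K-1+1)/2))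
      (fun m : Fin K => (-1:k)^((K-1-(m:ℕ))*p + (K-1-(m:ℕ))*(K-1-(m:ℕ)+1)/2)) with hc
  have hdual := dual_system (S := S) (f := f) (h := h) (c := c) ?_ ?_
  rotate_left
  · intro i
    rcases i with m | m
    · exact mul_ne_zero (neg_one_pow_ne _) (neg_one_pow_ne _)
    · exact neg_one_pow_ne _
  · intro i j
    rcases i with m | m <;> rcases j with m' | m' <;>
      simp only [hf, hh, hc, Sum.elim_inl, Sum.elim_inr]
    · rw [hguv]
      have hm := m.isLt
      have hm' := m'.isLt
      by_cases hij : m = m'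
      · subst hij
        rw [if_pos (by omega), if_pos rfl]
      · rw [if_neg ?_, if_neg (by simp [hij])]
        intro hcon
        exact hij (Fin.ext (by omega))
    · rw [hguu]
      rw [if_neg (by simp)]
    · rw [hgvv]
      rw [if_neg (by simp)]
    · rw [hgvu]
      have hm := m.isLt
      have hm' := m'.isLt
      by_cases hij : m = m'
      · subst hij
        rw [if_pos (by omega), if_pos rfl]
      · rw [if_neg ?_, if_neg (by simp [hij])]
        intro hcon
        exact hij (Fin.ext (by omega))
  obtain ⟨hLI, hnd⟩ := hdual
  have hmemf : ∀ i, f i ∈ U := fun i => Submodule.subset_span ⟨i, rfl⟩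
  have hmemh : ∀ i, h i ∈ U := by
    intro i
    rcases i with m | m
    · have : h (Sum.inl m) = f (Sum.inr ⟨K-1-(m:ℕ), by omega⟩) := rfl
      rw [this]; exact hmemf _
    · have : h (Sum.inr m) = f (Sum.inl ⟨K-1-(m:ℕ), by omega⟩) := rfl
      rw [this]; exact hmemf _
  have hUW : U ≤ W := by
    rw [hU, Submodule.span_le]
    rintro _ ⟨i, rfl⟩
    rcases i with m | m
    · exact powMem hWI _ v' hv'W
    · exact powMem hWI _ u' hu'W
  have hUinv : ∀ x ∈ U, I x ∈ U := by
    intro x hx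
    induction hx using Submodule.span_induction with
    | mem y hy =>
      obtain ⟨i, rfl⟩ := hy
      rcases i with m | m
      · have h1 : I (f (Sum.inl m)) = (I^((m:ℕ)+1)) v' := by
          show I ((I^(m:ℕ)) v') = _
          rw [show (m:ℕ)+1 = 1+(m:ℕ) by omega, ← pow_apply_add I 1 (m:ℕ) v', pow_one]
        rw [h1]
        rcases Nat.lt_or_ge ((m:ℕ)+1) K with h2 | h2
        · exact Submodule.subset_span ⟨Sum.inl ⟨(m:ℕ)+1, h2⟩, rfl⟩
        · rw [powZero hKv' h2]; exact Submodule.zero_mem _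
      · have h1 : I (f (Sum.inr m)) = (I^((m:ℕ)+1)) u' := by
          show I ((I^(m:ℕ)) u') = _
          rw [show (m:ℕ)+1 = 1+(m:ℕ) by omega, ← pow_apply_add I 1 (m:ℕ) u', pow_one]
        rw [h1]
        rcases Nat.lt_or_ge ((m:ℕ)+1) K with h2 | h2
        · exact Submodule.subset_span ⟨Sum.inr ⟨(m:ℕ)+1, h2⟩, rfl⟩
        · rw [powZero hKu' h2]; exact Submodule.zero_mem _
    | zero => rw [map_zero]; exact Submodule.zero_mem _
    | add y z _ _ hy hz => rw [map_add]; exact Submodule.add_mem _ hy hz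
    | smul a y _ hy => rw [map_smul]; exact Submodule.smul_mem _ a hy
  have hUgraded : S.IsGraded U := by
    apply isGraded_of_homog_span
    rintro _ ⟨i, rfl⟩
    rcases i with m | m
    · exact ⟨p + (m:ℕ), homogIpow hodd hhv' _⟩
    · exact ⟨q + (m:ℕ), homogIpow hodd hhu' _⟩
  have hUnd : ∀ x ∈ U, (∀ y ∈ U, S.g x y = 0) → x = 0 := by
    intro x hx hxy
    refine hnd x hx ?_
    intro i
    rw [S.symm]
    exact hxy _ (hmemh i)
  have hv'U : v' ∈ U := by
    have : f (Sum.inl ⟨0, by omega⟩) = v' := by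
      show (I^(0:ℕ)) v' = v'
      rw [pow_zero, Module.End.one_apply]
    rw [← this]; exact hmemf _
  have hv'ne : v' ≠ 0 := by
    intro hzero
    rw [hzero] at htop'
    simp at htop'
  refine ⟨U, hUW, hUinv, hUgraded, hUnd, ⟨K, hK1, ?_⟩, ?_⟩
  · refine ⟨v', u', p, q, hhv', hhu', by omega, hKv', hKu', hLI, rfl, ?_, ?_, ?_⟩
    · intro m _ m' _
      exact hgvv m m'
    · intro m _ m' _
      exact hguu m m'
    · intro m _ m' _
      exact hgvu m m'
  · intro hbot
    rw [hbot] at hv'U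
    exact hv'ne (Submodule.mem_bot k |>.mp hv'U)

/-- Extraction of a single block from a nonzero graded nilpotent nondegenerate subspace. -/
theorem exists_block [CharZero k] [IsAlgClosed k] (hodd : S.IsOddOp I)
    (hasa : S.IsAntiSelfAdj I) {W : Submodule k V} (hG : S.IsGraded W)
    (hWI : ∀ x ∈ W, I x ∈ W) (hndW : ∀ x ∈ W, (∀ y ∈ W, S.g x y = 0) → x = 0)
    {N : ℕ} (hN : ∀ x ∈ W, (I^N) x = 0) (hWne : W ≠ ⊥) :
    ∃ U : Submodule k V, U ≤ W ∧ (∀ x ∈ U, I x ∈ U) ∧ S.IsGraded U ∧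
      (∀ x ∈ U, (∀ y ∈ U, S.g x y = 0) → x = 0) ∧
      ((∃ K', 1 ≤ K' ∧ S.IsType1 I K' U) ∨ (∃ K', 1 ≤ K' ∧ S.IsType2 I K' U)) ∧ U ≠ ⊥ := by
  classical
  have hex : ∃ n, ∀ x ∈ W, (I^n) x = 0 := ⟨N, hN⟩
  set K := Nat.find hex with hKdef
  have hK : ∀ x ∈ W, (I^K) x = 0 := Nat.find_spec hex
  have hK1 : 1 ≤ K := by
    rcases Nat.eq_zero_or_pos K with h | h
    · exfalso
      apply hWne
      rw [Submodule.eq_bot_iff]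
      intro x hx
      have := hK x hx
      rw [h, pow_zero, Module.End.one_apply] at this
      exact this
    · exact h
  have hKmin : ∃ x ∈ W, (I^(K-1)) x ≠ 0 := by
    by_contra hcon
    push_neg at hcon
    have : K - 1 < K := by omega
    exact Nat.find_min hex this (fun x hx => not_ne_iff.mp (fun h => h (hcon x hx)))
  obtain ⟨x, hxW, hxne⟩ := hKmin
  -- find a homogeneous vector of maximal order
  obtain ⟨a, b, haW, hbW, hha, hhb, hab⟩ := hG.decomp hxW
  have hvex : ∃ (p : ℕ) (v : V), p ≤ 1 ∧ v ∈ W ∧ S.Homog p v ∧ (I^(K-1)) v ≠ 0 := by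
    by_cases ha : (I^(K-1)) a = 0
    · refine ⟨1, b, le_refl 1, hbW, hhb, ?_⟩
      intro hb
      apply hxne
      rw [hab, map_add, ha, hb, add_zero]
    · exact ⟨0, a, Nat.zero_le 1, haW, hha, ha⟩
  obtain ⟨p, v, hp, hvW, hhv, hvne⟩ := hvex
  by_cases hyp1 : ∃ r ≤ 1, ∃ w ∈ W, S.Homog r w ∧ S.g w ((I^(K-1)) w) ≠ 0
  · -- type 1
    obtain ⟨r, hr, w, hwW, hhw, hwtop⟩ := hyp1
    obtain ⟨U, h1, h2, h3, h4, h5, h6⟩ :=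
      type1_block hodd hasa hWI hK1 hK hr hwW hhw hwtop
    exact ⟨U, h1, h2, h3, h4, Or.inl h5, h6⟩
  · -- type 2
    have hyp2 : ∀ (r : ℕ) (w : V), w ∈ W → S.Homog r w → S.g w ((I^(K-1)) w) = 0 := by
      intro r w hwW hhw
      by_contra hcon
      exact hyp1 ⟨r % 2, by omega, w, hwW, homog_congr (by omega) hhw, hcon⟩
    -- find a pairing partner for v
    have hIvW : (I^(K-1)) v ∈ W := powMem hWI (K-1) v hvW
    have hu1 : ∃ u₁ ∈ W, S.g ((I^(K-1)) v) u₁ ≠ 0 := by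
      by_contra hcon
      push_neg at hcon
      exact hvne (hndW _ hIvW hcon)
    obtain ⟨u₁, hu₁W, hu₁ne⟩ := hu1
    have hcross1 : S.g v ((I^(K-1)) u₁) ≠ 0 := by
      intro h
      apply hu₁ne
      rw [gpow hodd hasa hhv (K-1) u₁, h, mul_zero]
    obtain ⟨c, d, hcW, hdW, hhc, hhd, hcd⟩ := hG.decomp hu₁W
    have huex : ∃ (q : ℕ) (u : V), q ≤ 1 ∧ u ∈ W ∧ S.Homog q u ∧
        S.g v ((I^(K-1)) u) ≠ 0 := by
      by_cases hc : S.g v ((I^(K-1)) c) = 0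
      · refine ⟨1, d, le_refl 1, hdW, hhd, ?_⟩
        intro hd
        apply hcross1
        rw [hcd, map_add, map_add, hc, hd, add_zero]
      · exact ⟨0, c, Nat.zero_le 1, hcW, hhc, hc⟩
    obtain ⟨q, u, hq, huW, hhu, hcross⟩ := huex
    have hpq : q % 2 = (p + K) % 2 := by
      have hop := opp_par hhv (homogIpow hodd hhu (K-1)) hcross
      omega
    obtain ⟨U, h1, h2, h3, h4, h5, h6⟩ :=
      type2_block hodd hasa hWI hK1 hK hp hq hpq hyp2 hvW huW hhv hhu hcross
    exact ⟨U, h1, h2, h3, h4, Or.inr h5, h6⟩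

/-- Splitting off a nondegenerate invariant graded subspace. -/
theorem split_off [FiniteDimensional k V] {W U : Submodule k V} (hGW : S.IsGraded W)
    (hWI : ∀ x ∈ W, I x ∈ W) (hndW : ∀ x ∈ W, (∀ y ∈ W, S.g x y = 0) → x = 0)
    (hUW : U ≤ W) (hUI : ∀ x ∈ U, I x ∈ U) (hGU : S.IsGraded U)
    (hndU : ∀ x ∈ U, (∀ y ∈ U, S.g x y = 0) → x = 0)
    (hasa : S.IsAntiSelfAdj I) :
    U ⊔ (W ⊓ S.ortho U) = W ∧ (∀ x ∈ W ⊓ S.ortho U, I x ∈ W ⊓ S.ortho U) ∧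
      S.IsGraded (W ⊓ S.ortho U) ∧
      (∀ x ∈ W ⊓ S.ortho U, (∀ y ∈ W ⊓ S.ortho U, S.g x y = 0) → x = 0) ∧
      (∀ x ∈ U, ∀ y ∈ W ⊓ S.ortho U, S.g x y = 0) ∧
      Module.finrank k U + Module.finrank k ↥(W ⊓ S.ortho U) = Module.finrank k W := by
  classical
  set U' := W ⊓ S.ortho U with hU'
  -- orthogonality
  have horth : ∀ x ∈ U, ∀ y ∈ U', S.g x y = 0 := by
    intro x hx y hy
    rw [S.symm]
    exact hy.2 x hx
  -- trivial intersection
  have hdisj : U ⊓ U' = ⊥ := by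
    rw [Submodule.eq_bot_iff]
    intro x hx
    exact hndU x hx.1 (fun y hy => hx.2.2 y hy)
  -- the dimension count
  have hdim : Module.finrank k W ≤ Module.finrank k U + Module.finrank k U' := by
    set Φ : W →ₗ[k] (U →ₗ[k] k) :=
      (LinearMap.lcomp k k U.subtype).comp (S.g.comp W.subtype) with hΦ
    have hker : LinearMap.ker Φ = Submodule.comap W.subtype U' := by
      ext w
      constructor
      · intro hw
        refine ⟨w.2, ?_⟩
        intro y hy
        have := congrArg (fun (f : U →ₗ[k] k) => f ⟨y, hy⟩) (LinearMap.mem_ker.mp hw)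
        simpa [hΦ] using this
      · intro hw
        rw [LinearMap.mem_ker]
        ext y
        simpa [hΦ] using hw.2 y.1 y.2
    have h1 := LinearMap.finrank_range_add_finrank_ker Φ
    have h2 : Module.finrank k (LinearMap.ker Φ) = Module.finrank k U' := by
      rw [hker]
      exact LinearEquiv.finrank_eq (Submodule.comapSubtypeEquivOfLe inf_le_left)
    have h3 : Module.finrank k (LinearMap.range Φ) ≤ Module.finrank k U := by
      have := Submodule.finrank_le (LinearMap.range Φ)
      rwa [Subspace.dual_finrank_eq] at this
    have h4 : Module.finrank k W = Module.finrank k ↥(LinearMap.range Φ)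
        + Module.finrank k ↥(LinearMap.ker Φ) := h1.symm
    omega
  have hsuple : U ⊔ U' ≤ W := sup_le hUW inf_le_left
  have hsupdim : Module.finrank k ↥(U ⊔ U') + Module.finrank k ↥(U ⊓ U')
      = Module.finrank k U + Module.finrank k U' :=
    Submodule.finrank_sup_add_finrank_inf_eq U U'
  have hbot0 : Module.finrank k ↥(U ⊓ U') = 0 := by
    rw [hdisj]
    exact finrank_bot k V
  have hsup : U ⊔ U' = W := by
    refine Submodule.eq_of_le_of_finrank_le hsuple ?_
    omega
  -- gradedness of U'
  have hGU' : S.IsGraded U' := by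
    refine le_antisymm ?_ (sup_le inf_le_left inf_le_left)
    intro y hy
    obtain ⟨a, b, haW, hbW, hha, hhb, hab⟩ := hGW.decomp hy.1
    have hborth : ∀ z ∈ U, S.g b z = 0 ∧ S.g a z = 0 := by
      intro z hz
      obtain ⟨z0, z1, hz0, hz1, hhz0, hhz1, hzz⟩ := hGU.decomp hz
      have hyz0 : S.g y z0 = 0 := hy.2 z0 hz0
      have hyz1 : S.g y z1 = 0 := hy.2 z1 hz1
      have haz0 : S.g a z0 = 0 := g_same_par hha hhz0 rfl
      have hbz1 : S.g b z1 = 0 := g_same_par hhb hhz1 rfl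
      have hbz0 : S.g b z0 = 0 := by
        have : S.g y z0 = S.g a z0 + S.g b z0 := by
          rw [hab, map_add, LinearMap.add_apply]
        rw [hyz0, haz0] at this
        linear_combination -this
      have haz1 : S.g a z1 = 0 := by
        have : S.g y z1 = S.g a z1 + S.g b z1 := by
          rw [hab, map_add, LinearMap.add_apply]
        rw [hyz1, hbz1] at this
        linear_combination -this
      constructor
      · rw [hzz, map_add, hbz0, hbz1, add_zero]
      · rw [hzz, map_add, haz0, haz1, add_zero]
    have haU' : a ∈ U' := ⟨haW, fun z hz => (hborth z hz).2⟩
    have hbU' : b ∈ U' := ⟨hbW, fun z hz => (hborth z hz).1⟩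
    rw [hab]
    exact Submodule.add_mem _
      (Submodule.mem_sup_left ⟨haU', homog0_iff.mp hha⟩)
      (Submodule.mem_sup_right ⟨hbU', homog1_iff.mp hhb⟩)
  -- invariance of U'
  have hinv : ∀ x ∈ U', I x ∈ U' := by
    intro x hx
    obtain ⟨a, b, haU', hbU', hha, hhb, hab⟩ := hGU'.decomp hx
    have key : ∀ (r : ℕ) (w : V), w ∈ U' → S.Homog r w → I w ∈ U' := by
      intro r w hw hhw
      refine ⟨hWI w hw.1, ?_⟩
      intro z hz
      have h1 := hasa r w hhw z
      have h2 : S.g w (I z) = 0 := hw.2 (I z) (hUI z hz)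
      rw [h2, mul_zero, add_zero] at h1
      exact h1
    rw [hab, map_add]
    exact Submodule.add_mem _ (key 0 a haU' hha) (key 1 b hbU' hhb)
  -- nondegeneracy of U'
  have hndU' : ∀ x ∈ U', (∀ y ∈ U', S.g x y = 0) → x = 0 := by
    intro x hx hx0
    refine hndW x hx.1 ?_
    intro w hw
    rw [← hsup] at hw
    obtain ⟨zu, hzu, y', hy', hw'⟩ := Submodule.mem_sup.mp hw
    have h1 : S.g x zu = 0 := hx.2 zu hzu
    have h2 : S.g x y' = 0 := hx0 y' hy'
    rw [← hw', map_add, h1, h2, add_zero]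
  refine ⟨hsup, hinv, hGU', hndU', horth, ?_⟩
  rw [hsup, hbot0] at hsupdim
  omega

/-- Decomposition of a nilpotent graded nondegenerate invariant subspace into blocks. -/
theorem nil_decomp [CharZero k] [IsAlgClosed k] [FiniteDimensional k V]
    (hodd : S.IsOddOp I) (hasa : S.IsAntiSelfAdj I) {N : ℕ} :
    ∀ d (W : Submodule k V), Module.finrank k ↥W ≤ d → S.IsGraded W →
      (∀ x ∈ W, I x ∈ W) → (∀ x ∈ W, (∀ y ∈ W, S.g x y = 0) → x = 0) →
      (∀ x ∈ W, (I^N) x = 0) →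
      ∃ (n : ℕ) (U : Fin n → Submodule k V),
        (∀ i, U i ≤ W) ∧ (⨆ i, U i) = W ∧
        (∀ i j, i ≠ j → ∀ x ∈ U i, ∀ y ∈ U j, S.g x y = 0) ∧
        (∀ i, ∀ x ∈ U i, I x ∈ U i) ∧ (∀ i, S.IsGraded (U i)) ∧
        (∀ i, ∀ x ∈ U i, (∀ y ∈ U i, S.g x y = 0) → x = 0) ∧
        (∀ i, (∃ K', 1 ≤ K' ∧ S.IsType1 I K' (U i)) ∨
              (∃ K', 1 ≤ K' ∧ S.IsType2 I K' (U i))) := by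
  intro d
  induction d with
  | zero =>
    intro W hd _ _ _ _
    have hW : W = ⊥ := by
      have h0 : Module.finrank k ↥W = 0 := by omega
      exact (Submodule.finrank_eq_zero).mp h0
    refine ⟨0, fun i => i.elim0, fun i => i.elim0, ?_, fun i => i.elim0,
      fun i => i.elim0, fun i => i.elim0, fun i => i.elim0, fun i => i.elim0⟩
    rw [hW]
    exact iSup_of_empty _
  | succ d ih =>
    intro W hd hGW hWI hndW hN
    by_cases hWbot : W = ⊥
    · refine ⟨0, fun i => i.elim0, fun i => i.elim0, ?_, fun i => i.elim0,
        fun i => i.elim0, fun i => i.elim0, fun i => i.elim0, fun i => i.elim0⟩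
      rw [hWbot]
      exact iSup_of_empty _
    obtain ⟨U₀, hU₀W, hU₀I, hGU₀, hndU₀, htype, hU₀ne⟩ :=
      exists_block hodd hasa hGW hWI hndW hN hWbot
    obtain ⟨hsup0, hU'I, hGU', hndU', horth0, hdim0⟩ :=
      split_off hGW hWI hndW hU₀W hU₀I hGU₀ hndU₀ hasa
    set U' := W ⊓ S.ortho U₀ with hU'def
    have hU'W : U' ≤ W := inf_le_left
    have hU'nil : ∀ x ∈ U', (I^N) x = 0 := fun x hx => hN x hx.1
    have hU₀pos : 1 ≤ Module.finrank k ↥U₀ := by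
      rcases Nat.eq_zero_or_pos (Module.finrank k ↥U₀) with h | h
      · exact absurd ((Submodule.finrank_eq_zero).mp h) hU₀ne
      · exact h
    have hd' : Module.finrank k ↥U' ≤ d := by omega
    obtain ⟨n, Us, hle, hsupUs, horthUs, hinvUs, hGUs, hndUs, htyUs⟩ :=
      ih U' hd' hGU' hU'I hndU' hU'nil
    refine ⟨n+1, Fin.cons U₀ Us, ?_, ?_, ?_, ?_, ?_, ?_, ?_⟩
    · intro i
      induction i using Fin.cases with
      | zero => simpa using hU₀W
      | succ j => simpa using (hle j).trans hU'W
    · refine le_antisymm (iSup_le ?_) ?_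
      · intro i
        induction i using Fin.cases with
        | zero => simpa using hU₀W
        | succ j => simpa using (hle j).trans hU'W
      · rw [← hsup0]
        refine sup_le ?_ ?_
        · exact le_iSup_of_le 0 (by simp)
        · rw [← hsupUs]
          exact iSup_le fun j => le_iSup_of_le j.succ (by simp)
    · intro i j hij
      induction i using Fin.cases with
      | zero =>
        induction j using Fin.cases with
        | zero => exact absurd rfl hij
        | succ j' =>
          simp only [Fin.cons_zero, Fin.cons_succ]
          intro x hx y hy
          exact horth0 x hx y (hle j' hy)
      | succ i' =>
        induction j using Fin.cases with
        | zero =>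
          simp only [Fin.cons_zero, Fin.cons_succ]
          intro x hx y hy
          rw [S.symm]
          exact horth0 y hy x (hle i' hx)
        | succ j' =>
          simp only [Fin.cons_succ]
          exact horthUs i' j' (fun h => hij (congrArg Fin.succ h))
    · intro i
      induction i using Fin.cases with
      | zero => simpa using hU₀I
      | succ j => simpa using hinvUs j
    · intro i
      induction i using Fin.cases with
      | zero => simpa using hGU₀
      | succ j => simpa using hGUs j
    · intro i
      induction i using Fin.cases with
      | zero => simpa using hndU₀
      | succ j => simpa using hndUs j
    · intro i
      induction i using Fin.cases with
      | zero => simpa using htype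
      | succ j => simpa using htyUs j

/-- Fitting decomposition adapted to the graded setting. -/
theorem fitting [FiniteDimensional k V] (hodd : S.IsOddOp I) (hasa : S.IsAntiSelfAdj I) :
    ∃ (N : ℕ) (Kn R : Submodule k V),
      (∀ x ∈ Kn, (I^N) x = 0) ∧ Kn ⊔ R = ⊤ ∧
      (∀ x ∈ Kn, ∀ y ∈ R, S.g x y = 0) ∧
      S.IsGraded Kn ∧ S.IsGraded R ∧ (∀ x ∈ Kn, I x ∈ Kn) ∧ (∀ x ∈ R, I x ∈ R) ∧
      (∀ x ∈ Kn, (∀ y ∈ Kn, S.g x y = 0) → x = 0) ∧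
      (∀ x ∈ R, (∀ y ∈ R, S.g x y = 0) → x = 0) ∧
      OddSP.IsType3 I R := by
  classical
  set N := 2 * (Module.finrank k V + 1) with hN
  set Kn := LinearMap.ker (I^N) with hKn
  set R := LinearMap.range (I^N) with hR
  have hNfr : Module.finrank k V ≤ N := by omega
  have hstab : LinearMap.ker (I^(N+N)) = LinearMap.ker (I^N) := by
    rw [Module.End.ker_pow_eq_ker_pow_finrank_of_le (f := I) (by omega),
      Module.End.ker_pow_eq_ker_pow_finrank_of_le (f := I) hNfr]
  have hKmem : ∀ x, x ∈ Kn ↔ (I^N) x = 0 := fun x => LinearMap.mem_ker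
  have hdisj : Kn ⊓ R = ⊥ := by
    rw [Submodule.eq_bot_iff]
    rintro x ⟨hx1, y, rfl⟩
    have h1 : (I^(N+N)) y = 0 := by
      rw [← pow_apply_add I N N y]
      exact hx1
    have h2 : y ∈ LinearMap.ker (I^N) := hstab ▸ LinearMap.mem_ker.mpr h1
    exact LinearMap.mem_ker.mp h2
  have hdims : Module.finrank k ↥R + Module.finrank k ↥Kn = Module.finrank k V :=
    LinearMap.finrank_range_add_finrank_ker (I^N)
  have hsup : Kn ⊔ R = ⊤ := by
    refine Submodule.eq_of_le_of_finrank_le le_top ?_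
    have h1 := Submodule.finrank_sup_add_finrank_inf_eq Kn R
    rw [hdisj] at h1
    rw [finrank_top]
    have h2 : Module.finrank k ↥(⊥ : Submodule k V) = 0 := finrank_bot k V
    omega
  -- homogeneous components of kernel elements stay in the kernel
  have hKcomp : ∀ x ∈ Kn, ∃ a b, a ∈ Kn ∧ b ∈ Kn ∧ S.Homog 0 a ∧ S.Homog 1 b ∧
      x = a + b := by
    intro x hx
    obtain ⟨a, b, _, _, hha, hhb, hab⟩ :=
      (isGraded_top (S := S)).decomp (Submodule.mem_top (x := x))
    have hA : S.Homog 0 ((I^N) a) := homog_congr (by omega) (homogIpow hodd hha N)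
    have hB : S.Homog 1 ((I^N) b) := homog_congr (by omega) (homogIpow hodd hhb N)
    have hsum : (I^N) a + (I^N) b = 0 := by
      rw [← map_add, ← hab]
      exact (hKmem x).mp hx
    have hA0 : (I^N) a = 0 := by
      have hmem : (I^N) a ∈ S.V0 ⊓ S.V1 := by
        refine ⟨homog0_iff.mp hA, ?_⟩
        rw [eq_neg_of_add_eq_zero_left hsum]
        exact Submodule.neg_mem _ (homog1_iff.mp hB)
      rw [S.compl.inf_eq_bot] at hmem
      exact hmem
    have hB0 : (I^N) b = 0 := by
      rw [hA0, zero_add] at hsum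
      exact hsum
    exact ⟨a, b, (hKmem a).mpr hA0, (hKmem b).mpr hB0, hha, hhb, hab⟩
  have hGK : S.IsGraded Kn := by
    refine le_antisymm ?_ (sup_le inf_le_left inf_le_left)
    intro x hx
    obtain ⟨a, b, haK, hbK, hha, hhb, hab⟩ := hKcomp x hx
    rw [hab]
    exact Submodule.add_mem _
      (Submodule.mem_sup_left ⟨haK, homog0_iff.mp hha⟩)
      (Submodule.mem_sup_right ⟨hbK, homog1_iff.mp hhb⟩)
  have hGR : S.IsGraded R := by
    refine le_antisymm ?_ (sup_le inf_le_left inf_le_left)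
    rintro _ ⟨y, rfl⟩
    obtain ⟨a, b, _, _, hha, hhb, hab⟩ :=
      (isGraded_top (S := S)).decomp (Submodule.mem_top (x := y))
    have hA : S.Homog 0 ((I^N) a) := homog_congr (by omega) (homogIpow hodd hha N)
    have hB : S.Homog 1 ((I^N) b) := homog_congr (by omega) (homogIpow hodd hhb N)
    have h1 : (I^N) y = (I^N) a + (I^N) b := by rw [hab, map_add]
    rw [h1]
    exact Submodule.add_mem _
      (Submodule.mem_sup_left ⟨⟨a, rfl⟩, homog0_iff.mp hA⟩)
      (Submodule.mem_sup_right ⟨⟨b, rfl⟩, homog1_iff.mp hB⟩)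
  have hcomm : ∀ x : V, (I^N) (I x) = I ((I^N) x) := by
    intro x
    rw [show I x = (I^1) x by rw [pow_one], pow_apply_add, show N+1 = 1+N by omega,
      ← pow_apply_add I 1 N x, pow_one]
  have hKinv : ∀ x ∈ Kn, I x ∈ Kn := by
    intro x hx
    rw [hKmem, hcomm, (hKmem x).mp hx, map_zero]
  have hRinv : ∀ x ∈ R, I x ∈ R := by
    rintro _ ⟨y, rfl⟩
    exact ⟨I y, hcomm y⟩
  -- orthogonality
  have horth : ∀ x ∈ Kn, ∀ y ∈ R, S.g x y = 0 := by
    intro x hx y hy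
    obtain ⟨z, rfl⟩ := hy
    obtain ⟨a, b, haK, hbK, hha, hhb, hab⟩ := hKcomp x hx
    have ha0 : S.g a ((I^N) z) = 0 := by
      rw [gpow' hodd hasa hha N z, (hKmem a).mp haK, map_zero, LinearMap.zero_apply,
        mul_zero]
    have hb0 : S.g b ((I^N) z) = 0 := by
      rw [gpow' hodd hasa hhb N z, (hKmem b).mp hbK, map_zero, LinearMap.zero_apply,
        mul_zero]
    rw [hab, map_add, LinearMap.add_apply, ha0, hb0, add_zero]
  have hndK : ∀ x ∈ Kn, (∀ y ∈ Kn, S.g x y = 0) → x = 0 := by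
    intro x hx h0
    refine S.nondeg x ?_
    intro w
    have hw : w ∈ Kn ⊔ R := by rw [hsup]; exact Submodule.mem_top
    obtain ⟨a, ha, b, hb, hw'⟩ := Submodule.mem_sup.mp hw
    rw [← hw', map_add, h0 a ha, horth x hx b hb, add_zero]
  have hndR : ∀ x ∈ R, (∀ y ∈ R, S.g x y = 0) → x = 0 := by
    intro x hx h0
    refine S.nondeg x ?_
    intro w
    have hw : w ∈ Kn ⊔ R := by rw [hsup]; exact Submodule.mem_top
    obtain ⟨a, ha, b, hb, hw'⟩ := Submodule.mem_sup.mp hw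
    have h1 : S.g x a = 0 := by
      rw [S.symm]
      exact horth a ha x hx
    rw [← hw', map_add, h1, h0 b hb, add_zero]
  -- type 3
  have hinj : ∀ x ∈ R, I x = 0 → x = 0 := by
    intro x hx hIx
    have h1 : x ∈ Kn := by
      rw [hKmem]
      rw [show N = (N-1) + 1 by omega, ← pow_apply_add I (N-1) 1 x, pow_one, hIx, map_zero]
    have : x ∈ Kn ⊓ R := ⟨h1, hx⟩
    rw [hdisj] at this
    exact this
  have hsurj : ∀ y ∈ R, ∃ x ∈ R, I x = y := by
    have hker : LinearMap.ker (I.restrict hRinv) = ⊥ := by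
      rw [Submodule.eq_bot_iff]
      intro x hx
      have h1 : I (x:V) = 0 := by
        have := LinearMap.mem_ker.mp hx
        have h2 := congrArg (Subtype.val) this
        simpa [LinearMap.restrict_apply] using h2
      exact Subtype.ext (hinj x.1 x.2 h1)
    have hinj' : Function.Injective (I.restrict hRinv) := LinearMap.ker_eq_bot.mp hker
    have hsurj' := (LinearMap.injective_iff_surjective).mp hinj'
    intro y hy
    obtain ⟨x, hx⟩ := hsurj' ⟨y, hy⟩
    refine ⟨x.1, x.2, ?_⟩
    have := congrArg Subtype.val hx
    simpa [LinearMap.restrict_apply] using this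
  exact ⟨N, Kn, R, fun x hx => (hKmem x).mp hx, hsup, horth, hGK, hGR, hKinv, hRinv,
    hndK, hndR, hRinv, hinj, hsurj⟩
end OddSP
end Aux

/-- Over an algebraically closed field of characteristic zero, any odd
anti-self-adjoint operator `I` on a finite-dimensional ℤ/2ℤ-graded vector space with odd
symmetric non-degenerate scalar product decomposes the space into a direct sum of pairwise
`g`-orthogonal, `I`-invariant graded subspaces, each of type `1_K` (`K ≥ 1`), of type
`2_K` (`K ≥ 1`), or of type `3`. -/
theorem oddASA_block_decomposition
    {k V : Type*} [Field k] [IsAlgClosed k] [CharZero k]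
    [AddCommGroup V] [Module k V] [FiniteDimensional k V]
    (S : OddSP k V) (I : V →ₗ[k] V)
    (hodd : S.IsOddOp I) (hasa : S.IsAntiSelfAdj I) :
    ∃ (n : ℕ) (U : Fin n → Submodule k V),
      DirectSum.IsInternal U ∧
      (∀ i j, i ≠ j → ∀ x ∈ U i, ∀ y ∈ U j, S.g x y = 0) ∧
      (∀ i, ∀ x ∈ U i, I x ∈ U i) ∧
      (∀ i, S.IsGraded (U i)) ∧
      (∀ i, (∃ K, 1 ≤ K ∧ S.IsType1 I K (U i)) ∨
            (∃ K, 1 ≤ K ∧ S.IsType2 I K (U i)) ∨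
            OddSP.IsType3 I (U i)) := by
  classical
  obtain ⟨N, Kn, R, hKnil, hsup, horth, hGK, hGR, hKinv, hRinv, hndK, hndR, hty3⟩ :=
    OddSP.fitting hodd hasa
  obtain ⟨n, Us, hle, hsupUs, horthUs, hinvUs, hGUs, hndUs, htyUs⟩ :=
    OddSP.nil_decomp hodd hasa (Module.finrank k ↥Kn) Kn (le_refl _) hGK hKinv hndK hKnil
  set U : Fin (n+1) → Submodule k V := Fin.cons R Us with hU
  have horthall : ∀ i j, i ≠ j → ∀ x ∈ U i, ∀ y ∈ U j, S.g x y = 0 := by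
    intro i j hij
    induction i using Fin.cases with
    | zero =>
      induction j using Fin.cases with
      | zero => exact absurd rfl hij
      | succ j' =>
        simp only [hU, Fin.cons_zero, Fin.cons_succ]
        intro x hx y hy
        rw [S.symm]
        exact horth y (hle j' hy) x hx
    | succ i' =>
      induction j using Fin.cases with
      | zero =>
        simp only [hU, Fin.cons_zero, Fin.cons_succ]
        intro x hx y hy
        exact horth x (hle i' hx) y hy
      | succ j' =>
        simp only [hU, Fin.cons_succ]
        exact horthUs i' j' (fun h => hij (congrArg Fin.succ h))
  have hndall : ∀ i, ∀ x ∈ U i, (∀ y ∈ U i, S.g x y = 0) → x = 0 := by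
    intro i
    induction i using Fin.cases with
    | zero => simpa [hU] using hndR
    | succ j => simpa [hU] using hndUs j
  refine ⟨n+1, U, ?_, horthall, ?_, ?_, ?_⟩
  · rw [DirectSum.isInternal_submodule_iff_iSupIndep_and_iSup_eq_top]
    constructor
    · intro i
      rw [Submodule.disjoint_def]
      intro x hxi hxrest
      have hrest : (⨆ j, ⨆ (_ : j ≠ i), U j) ≤ S.ortho (U i) := by
        refine iSup_le fun j => iSup_le fun hj => ?_
        intro z hz y hy
        exact horthall j i hj z hz y hy
      exact hndall i x hxi (fun y hy => hrest hxrest y hy)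
    · refine le_antisymm le_top ?_
      rw [← hsup]
      refine sup_le ?_ ?_
      · rw [← hsupUs]
        exact iSup_le fun j => le_iSup_of_le j.succ (by simp [hU])
      · exact le_iSup_of_le 0 (by simp [hU])
  · intro i
    induction i using Fin.cases with
    | zero => simpa [hU] using hRinv
    | succ j => simpa [hU] using hinvUs j
  · intro i
    induction i using Fin.cases with
    | zero => simpa [hU] using hGR
    | succ j => simpa [hU] using hGUs j
  · intro i
    induction i using Fin.cases with
    | zero =>
      right; right
      simpa [hU] using hty3
    | succ j =>
      rcases htyUs j with h | h
      · left; simpa [hU] using h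
      · right; left; simpa [hU] using h
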